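/- The seminorms L and L_D are equivalent: for every Lipschitz function φ on Z_p, √((p−1)/p) · L(φ) ≥ L_D(φ) ≥ (p−1)/(2p√p) · L(φ), where L_D(φ) = ‖[D, π(φ)]‖ and L(φ) is the p-adic Lipschitz constant. -/

import Mathlib

/-- The Lipschitz seminorm `L(φ) = sup_{x≠y} |φ(x)-φ(y)|/|x-y|_p`. -/
noncomputable def lipSeminorm (p : ℕ) [Fact p.Prime] (φ : ℤ_[p] → ℂ) : ℝ :=
  ⨆ q : {q : ℤ_[p] × ℤ_[p] // q.1 ≠ q.2}, ‖φ (q : ℤ_[p] × ℤ_[p]).1 - φ (q : ℤ_[p] × ℤ_[p]).2‖ / ‖(q : ℤ_[p] × ℤ_[p]).1 - (q : ℤ_[p] × ℤ_[p]).2‖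

/-- The spectral seminorm
`L_D(φ) = (sup_{n, 0≤k<p^n} (1/p) ∑_{i=1}^{p-1} |φ(k) - φ(k+ip^n)|² / p^{-2n})^{1/2}`. -/
noncomputable def spectralSeminorm (p : ℕ) [Fact p.Prime] (φ : ℤ_[p] → ℂ) : ℝ :=
  Real.sqrt (⨆ x : Σ n : ℕ, Fin (p ^ n),
    (p : ℝ)⁻¹ * ∑ i ∈ Finset.Icc 1 (p - 1),
      ‖φ (((x.2 : ℕ) : ℤ_[p])) - φ ((((x.2 : ℕ) + i * p ^ x.1 : ℕ)) : ℤ_[p])‖ ^ 2 *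
        (p : ℝ) ^ (2 * x.1))

namespace Stmt18Aux

variable (p : ℕ) [hp : Fact p.Prime] (φ : ℤ_[p] → ℂ)

/-- The family whose supremum is the square of the spectral seminorm. -/
noncomputable def F (x : Σ n : ℕ, Fin (p ^ n)) : ℝ :=
  (p : ℝ)⁻¹ * ∑ i ∈ Finset.Icc 1 (p - 1),
      ‖φ (((x.2 : ℕ) : ℤ_[p])) - φ ((((x.2 : ℕ) + i * p ^ x.1 : ℕ)) : ℤ_[p])‖ ^ 2 *
        (p : ℝ) ^ (2 * x.1)

theorem spectral_eq : spectralSeminorm p φ = Real.sqrt (⨆ x, F p φ x) := rfl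

variable {p}

theorem hp1 : (1 : ℝ) < p := by exact_mod_cast hp.out.one_lt

theorem hp0 : (0 : ℝ) < p := lt_trans one_pos (hp1 (p := p))

/-- norm of the difference of the two sample points. -/
theorem norm_nat_diff (k i n : ℕ) :
    ‖((k : ℤ_[p])) - (((k + i * p ^ n : ℕ)) : ℤ_[p])‖ ≤ ((p : ℝ) ^ n)⁻¹ := by
  push_cast
  have : ((k : ℤ_[p])) - ((k : ℤ_[p]) + (i : ℤ_[p]) * (p : ℤ_[p]) ^ n)
      = -((i : ℤ_[p]) * (p : ℤ_[p]) ^ n) := by ring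
  rw [this, norm_neg]
  calc ‖(i : ℤ_[p]) * (p : ℤ_[p]) ^ n‖ = ‖(i : ℤ_[p])‖ * ‖(p : ℤ_[p])‖ ^ n := by
        rw [norm_mul, norm_pow]
    _ ≤ 1 * ((p : ℝ)⁻¹) ^ n := by
        apply mul_le_mul (PadicInt.norm_le_one _) _ (by positivity) zero_le_one
        rw [PadicInt.norm_p]
    _ = ((p : ℝ) ^ n)⁻¹ := by rw [one_mul, inv_pow]

theorem F_nonneg (x : Σ n : ℕ, Fin (p ^ n)) : 0 ≤ F p φ x := by
  unfold F; positivity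

theorem F_le {A : ℝ} (hA : 0 ≤ A) (h : ∀ x y : ℤ_[p], ‖φ x - φ y‖ ≤ A * ‖x - y‖)
    (x : Σ n : ℕ, Fin (p ^ n)) : F p φ x ≤ ((p : ℝ) - 1) / p * A ^ 2 := by
  have hps : (0:ℝ) < p := hp0
  have hterm : ∀ i ∈ Finset.Icc 1 (p - 1),
      ‖φ (((x.2 : ℕ) : ℤ_[p])) - φ ((((x.2 : ℕ) + i * p ^ x.1 : ℕ)) : ℤ_[p])‖ ^ 2 *
        (p : ℝ) ^ (2 * x.1) ≤ A ^ 2 := by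
    intro i _
    have h1 : ‖φ (((x.2 : ℕ) : ℤ_[p])) - φ ((((x.2 : ℕ) + i * p ^ x.1 : ℕ)) : ℤ_[p])‖
        ≤ A * ((p : ℝ) ^ x.1)⁻¹ := by
      refine (h _ _).trans ?_
      exact mul_le_mul_of_nonneg_left (norm_nat_diff _ _ _) hA
    have h2 : ‖φ (((x.2 : ℕ) : ℤ_[p])) - φ ((((x.2 : ℕ) + i * p ^ x.1 : ℕ)) : ℤ_[p])‖ ^ 2
        ≤ (A * ((p : ℝ) ^ x.1)⁻¹) ^ 2 := by
      exact pow_le_pow_left₀ (norm_nonneg _) h1 2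
    calc ‖φ (((x.2 : ℕ) : ℤ_[p])) - φ ((((x.2 : ℕ) + i * p ^ x.1 : ℕ)) : ℤ_[p])‖ ^ 2 *
          (p : ℝ) ^ (2 * x.1)
        ≤ (A * ((p : ℝ) ^ x.1)⁻¹) ^ 2 * (p : ℝ) ^ (2 * x.1) := by
          exact mul_le_mul_of_nonneg_right h2 (by positivity)
      _ = A ^ 2 := by
          rw [mul_pow, mul_comm 2 x.1, pow_mul]
          field_simp
  have hsum : ∑ i ∈ Finset.Icc 1 (p - 1),
      ‖φ (((x.2 : ℕ) : ℤ_[p])) - φ ((((x.2 : ℕ) + i * p ^ x.1 : ℕ)) : ℤ_[p])‖ ^ 2 *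
        (p : ℝ) ^ (2 * x.1) ≤ ((p : ℝ) - 1) * A ^ 2 := by
    refine (Finset.sum_le_sum hterm).trans ?_
    rw [Finset.sum_const, Nat.card_Icc]
    have hcard : ((p - 1 + 1 - 1 : ℕ) : ℝ) ≤ (p : ℝ) - 1 := by
      have h2 := hp.out.two_le
      have : (p - 1 + 1 - 1 : ℕ) = p - 1 := by omega
      rw [this]
      have : ((p - 1 : ℕ) : ℝ) = (p : ℝ) - 1 := by
        have : (1:ℕ) ≤ p := hp.out.one_le
        push_cast [this]; ring
      rw [this]
    rw [nsmul_eq_mul]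
    exact mul_le_mul_of_nonneg_right hcard (by positivity)
  unfold F
  rw [div_mul_eq_mul_div, div_eq_inv_mul]
  exact mul_le_mul_of_nonneg_left hsum (by positivity)

section Lip

variable (hφ : ∃ C : ℝ, ∀ x y : ℤ_[p], ‖φ x - φ y‖ ≤ C * ‖x - y‖)
include hφ

theorem C_exists : ∃ C : ℝ, 0 ≤ C ∧ ∀ x y : ℤ_[p], ‖φ x - φ y‖ ≤ C * ‖x - y‖ := by
  obtain ⟨C, hC⟩ := hφ
  refine ⟨C, ?_, hC⟩
  have h := hC 0 1
  have h1 : ‖(0 : ℤ_[p]) - 1‖ = 1 := by simp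
  rw [h1, mul_one] at h
  exact le_trans (norm_nonneg _) h

theorem lip_nonneg : 0 ≤ lipSeminorm p φ := by
  apply Real.iSup_nonneg
  intro q
  positivity

theorem lip_bddAbove : BddAbove (Set.range fun q : {q : ℤ_[p] × ℤ_[p] // q.1 ≠ q.2} =>
    ‖φ (q : ℤ_[p] × ℤ_[p]).1 - φ (q : ℤ_[p] × ℤ_[p]).2‖ / ‖(q : ℤ_[p] × ℤ_[p]).1 - (q : ℤ_[p] × ℤ_[p]).2‖) := by
  obtain ⟨C, hC0, hC⟩ := C_exists φ hφ
  refine ⟨C, ?_⟩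
  rintro _ ⟨q, rfl⟩
  have hne : (q : ℤ_[p] × ℤ_[p]).1 - (q : ℤ_[p] × ℤ_[p]).2 ≠ 0 := sub_ne_zero.mpr q.2
  have hpos : 0 < ‖(q : ℤ_[p] × ℤ_[p]).1 - (q : ℤ_[p] × ℤ_[p]).2‖ := norm_pos_iff.mpr hne
  rw [div_le_iff₀ hpos]
  exact hC _ _

theorem lip_bound (x y : ℤ_[p]) : ‖φ x - φ y‖ ≤ lipSeminorm p φ * ‖x - y‖ := by
  rcases eq_or_ne x y with rfl | hne
  · simp
  · have hpos : 0 < ‖x - y‖ := norm_pos_iff.mpr (sub_ne_zero.mpr hne)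
    rw [← div_le_iff₀ hpos]
    exact le_ciSup (lip_bddAbove φ hφ) (⟨(x, y), hne⟩ : {q : ℤ_[p] × ℤ_[p] // q.1 ≠ q.2})

theorem spec_bddAbove : BddAbove (Set.range (F p φ)) := by
  obtain ⟨C, hC0, hC⟩ := C_exists φ hφ
  refine ⟨((p : ℝ) - 1) / p * C ^ 2, ?_⟩
  rintro _ ⟨x, rfl⟩
  exact F_le φ hC0 hC x

theorem spec_sup_nonneg : 0 ≤ ⨆ x, F p φ x :=
  Real.iSup_nonneg (F_nonneg φ)

theorem spec_nonneg : 0 ≤ spectralSeminorm p φ := Real.sqrt_nonneg _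

/-- The basic step estimate extracted from the spectral seminorm. -/
theorem step_bound {n k i : ℕ} (hk : k < p ^ n) (hi1 : 1 ≤ i) (hip : i ≤ p - 1) :
    ‖φ (k : ℤ_[p]) - φ (((k + i * p ^ n : ℕ)) : ℤ_[p])‖ ≤
      Real.sqrt p * spectralSeminorm p φ * ((p : ℝ) ^ n)⁻¹ := by
  have hmem : i ∈ Finset.Icc 1 (p - 1) := Finset.mem_Icc.mpr ⟨hi1, hip⟩
  have hppos : (0:ℝ) < p := hp0
  set x : Σ n : ℕ, Fin (p ^ n) := ⟨n, ⟨k, hk⟩⟩ with hx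
  set S : ℝ := ⨆ y, F p φ y with hS
  have hSnn : 0 ≤ S := Real.iSup_nonneg (F_nonneg φ)
  have hsingle : ‖φ (((x.2 : ℕ) : ℤ_[p])) - φ ((((x.2 : ℕ) + i * p ^ x.1 : ℕ)) : ℤ_[p])‖ ^ 2 *
      (p : ℝ) ^ (2 * x.1) ≤
      ∑ j ∈ Finset.Icc 1 (p - 1),
        ‖φ (((x.2 : ℕ) : ℤ_[p])) - φ ((((x.2 : ℕ) + j * p ^ x.1 : ℕ)) : ℤ_[p])‖ ^ 2 *
          (p : ℝ) ^ (2 * x.1) :=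
    Finset.single_le_sum (f := fun j =>
      ‖φ (((x.2 : ℕ) : ℤ_[p])) - φ ((((x.2 : ℕ) + j * p ^ x.1 : ℕ)) : ℤ_[p])‖ ^ 2 *
        (p : ℝ) ^ (2 * x.1)) (fun j _ => by positivity) hmem
  have hF : F p φ x ≤ S := le_ciSup (spec_bddAbove φ hφ) x
  set d : ℝ := ‖φ (k : ℤ_[p]) - φ (((k + i * p ^ n : ℕ)) : ℤ_[p])‖ with hd
  have hdx : d = ‖φ (((x.2 : ℕ) : ℤ_[p])) - φ ((((x.2 : ℕ) + i * p ^ x.1 : ℕ)) : ℤ_[p])‖ := rfl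
  have hkey : (p : ℝ)⁻¹ * (d ^ 2 * (p : ℝ) ^ (2 * n)) ≤ S := by
    refine le_trans ?_ hF
    unfold F
    rw [hdx]
    exact mul_le_mul_of_nonneg_left hsingle (by positivity)
  have hd2 : d ^ 2 ≤ (p : ℝ) * S * ((p : ℝ) ^ (2 * n))⁻¹ := by
    have h := mul_le_mul_of_nonneg_left hkey (le_of_lt hppos)
    have h2 := mul_le_mul_of_nonneg_right h
      (by positivity : (0:ℝ) ≤ ((p : ℝ) ^ (2 * n))⁻¹)
    calc d ^ 2 = (p : ℝ) * ((p : ℝ)⁻¹ * (d ^ 2 * (p : ℝ) ^ (2 * n))) * ((p : ℝ) ^ (2 * n))⁻¹ := by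
          field_simp
      _ ≤ _ := h2
  have hsq := Real.sqrt_le_sqrt hd2
  rw [Real.sqrt_sq (norm_nonneg _)] at hsq
  refine hsq.trans ?_
  rw [Real.sqrt_mul (by positivity), Real.sqrt_mul (by positivity), Real.sqrt_inv,
    spectral_eq]
  have h2n : Real.sqrt ((p : ℝ) ^ (2 * n)) = (p : ℝ) ^ n := by
    rw [mul_comm 2 n, pow_mul]
    exact Real.sqrt_sq (by positivity)
  rw [h2n]

/-- Chaining the step estimates along base-`p` digits. -/
theorem chain (a : ℕ) : ∀ M m : ℕ, m ≤ M →
    ‖φ ((a % p ^ M : ℕ) : ℤ_[p]) - φ ((a % p ^ m : ℕ) : ℤ_[p])‖ ≤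
      Real.sqrt p * spectralSeminorm p φ * ∑ j ∈ Finset.Ico m M, ((p : ℝ) ^ j)⁻¹ := by
  intro M
  induction M with
  | zero => intro m hm; interval_cases m; simp
  | succ M ih =>
    intro m hm
    rcases Nat.lt_or_ge m (M + 1) with hlt | hge
    · have hmM : m ≤ M := Nat.lt_succ_iff.mp hlt
      have hsplit : a % p ^ (M + 1) = a % p ^ M + (a % p ^ (M + 1) / p ^ M) * p ^ M := by
        have h1 : a % p ^ (M + 1) % p ^ M = a % p ^ M := by
          rw [Nat.mod_mod_of_dvd _ (pow_dvd_pow p (Nat.le_succ M))]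
        conv_lhs => rw [← Nat.div_add_mod (a % p ^ (M + 1)) (p ^ M)]
        rw [h1]; ring
      set i : ℕ := a % p ^ (M + 1) / p ^ M with hi
      have hilt : i < p := by
        rw [hi]
        apply Nat.div_lt_of_lt_mul
        calc a % p ^ (M + 1) < p ^ (M + 1) := Nat.mod_lt _ (Nat.pow_pos hp.out.pos)
          _ = p ^ M * p := by rw [pow_succ]
      have hstep : ‖φ ((a % p ^ (M + 1) : ℕ) : ℤ_[p]) - φ ((a % p ^ M : ℕ) : ℤ_[p])‖ ≤
          Real.sqrt p * spectralSeminorm p φ * ((p : ℝ) ^ M)⁻¹ := by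
        rcases Nat.eq_zero_or_pos i with hi0 | hipos
        · rw [hsplit, hi0]
          simp only [zero_mul, add_zero, sub_self, norm_zero]
          exact mul_nonneg (mul_nonneg (Real.sqrt_nonneg _) (Real.sqrt_nonneg _))
            (by positivity)
        · have := step_bound φ hφ (k := a % p ^ M) (i := i) (n := M)
            (Nat.mod_lt _ (Nat.pow_pos hp.out.pos)) hipos (by omega)
          rw [hsplit]
          rw [← norm_neg]
          simpa [neg_sub] using this
      calc ‖φ ((a % p ^ (M + 1) : ℕ) : ℤ_[p]) - φ ((a % p ^ m : ℕ) : ℤ_[p])‖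
          ≤ ‖φ ((a % p ^ (M + 1) : ℕ) : ℤ_[p]) - φ ((a % p ^ M : ℕ) : ℤ_[p])‖ +
            ‖φ ((a % p ^ M : ℕ) : ℤ_[p]) - φ ((a % p ^ m : ℕ) : ℤ_[p])‖ := by
            have := norm_sub_le_norm_sub_add_norm_sub
              (φ ((a % p ^ (M + 1) : ℕ) : ℤ_[p])) (φ ((a % p ^ M : ℕ) : ℤ_[p]))
              (φ ((a % p ^ m : ℕ) : ℤ_[p]))
            exact this
        _ ≤ Real.sqrt p * spectralSeminorm p φ * ((p : ℝ) ^ M)⁻¹ +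
            Real.sqrt p * spectralSeminorm p φ * ∑ j ∈ Finset.Ico m M, ((p : ℝ) ^ j)⁻¹ :=
            add_le_add hstep (ih m hmM)
        _ = Real.sqrt p * spectralSeminorm p φ * ∑ j ∈ Finset.Ico m (M + 1), ((p : ℝ) ^ j)⁻¹ := by
            rw [Finset.sum_Ico_succ_top hmM]; ring
    · have : m = M + 1 := le_antisymm hm hge
      subst this
      simp

end Lip

/-- geometric tail bound -/
theorem geom_tail (m M : ℕ) :
    ∑ j ∈ Finset.Ico m M, ((p : ℝ) ^ j)⁻¹ ≤ ((p : ℝ) ^ m)⁻¹ * ((p : ℝ) / ((p : ℝ) - 1)) := by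
  have hppos : (0:ℝ) < p := hp0
  have hp1' : (1:ℝ) < p := hp1
  have hr1 : (p : ℝ)⁻¹ < 1 := by
    rw [inv_lt_one_iff₀]; right; exact hp1'
  have hr0 : (0:ℝ) ≤ (p : ℝ)⁻¹ := by positivity
  calc ∑ j ∈ Finset.Ico m M, ((p : ℝ) ^ j)⁻¹
      = ∑ j ∈ Finset.range (M - m), ((p : ℝ)⁻¹) ^ m * ((p : ℝ)⁻¹) ^ j := by
        rw [Finset.sum_Ico_eq_sum_range]
        refine Finset.sum_congr rfl fun j _ => ?_
        rw [← inv_pow, ← pow_add]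
    _ = ((p : ℝ)⁻¹) ^ m * ∑ j ∈ Finset.range (M - m), ((p : ℝ)⁻¹) ^ j := by
        rw [Finset.mul_sum]
    _ ≤ ((p : ℝ)⁻¹) ^ m * ((1 : ℝ) - (p : ℝ)⁻¹)⁻¹ := by
        refine mul_le_mul_of_nonneg_left ?_ (by positivity)
        have hne : (p : ℝ)⁻¹ ≠ 1 := ne_of_lt hr1
        have hpow : (0:ℝ) ≤ ((p : ℝ)⁻¹) ^ (M - m) := by positivity
        rw [geom_sum_eq hne, div_le_iff_of_neg (by linarith : (p : ℝ)⁻¹ - 1 < 0)]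
        have h1 : ((1:ℝ) - (p : ℝ)⁻¹)⁻¹ * ((p : ℝ)⁻¹ - 1) = -1 := by
          have hne2 : (1:ℝ) - (p : ℝ)⁻¹ ≠ 0 := by
            intro h; rw [sub_eq_zero] at h; exact hne h.symm
          have : ((p : ℝ)⁻¹ - 1) = -((1:ℝ) - (p : ℝ)⁻¹) := by ring
          rw [this, mul_neg, inv_mul_cancel₀ hne2]
        rw [h1]
        linarith
    _ = ((p : ℝ) ^ m)⁻¹ * ((p : ℝ) / ((p : ℝ) - 1)) := by
        rw [inv_pow]
        congr 1
        have h2 : (1:ℝ) - (p : ℝ)⁻¹ = ((p : ℝ) - 1) / p := by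
          field_simp
        rw [h2, inv_div]

end Stmt18Aux

namespace Stmt18Aux

variable {p : ℕ} [hp : Fact p.Prime] (φ : ℤ_[p] → ℂ)
variable (hφ : ∃ C : ℝ, ∀ x y : ℤ_[p], ‖φ x - φ y‖ ≤ C * ‖x - y‖)
include hφ

/-- Pair estimate for natural numbers congruent mod `p^n`. -/
theorem nat_pair (a b n : ℕ) (hab : a % p ^ n = b % p ^ n) :
    ‖φ (a : ℤ_[p]) - φ (b : ℤ_[p])‖ ≤
      2 * (Real.sqrt p * spectralSeminorm p φ) * (((p : ℝ) ^ n)⁻¹ * ((p : ℝ) / ((p : ℝ) - 1))) := by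
  set M : ℕ := max n (max a b) with hM
  have hx : ∀ c : ℕ, c ≤ max a b → c % p ^ M = c := fun c hc => Nat.mod_eq_of_lt <| by
    calc c < p ^ c := Nat.lt_pow_self hp.out.one_lt
      _ ≤ p ^ M := Nat.pow_le_pow_right hp.out.pos (le_trans hc (le_max_right _ _))
  have hnM : n ≤ M := le_max_left _ _
  have ha := chain φ hφ a M n hnM
  have hb := chain φ hφ b M n hnM
  rw [hx a (le_max_left _ _)] at ha
  rw [hx b (le_max_right _ _)] at hb
  have hgeom := geom_tail (p := p) n M
  have hS : 0 ≤ Real.sqrt (p:ℝ) * spectralSeminorm p φ :=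
    mul_nonneg (Real.sqrt_nonneg _) (Real.sqrt_nonneg _)
  have ha' : ‖φ (a : ℤ_[p]) - φ ((a % p ^ n : ℕ) : ℤ_[p])‖ ≤
      Real.sqrt p * spectralSeminorm p φ * (((p : ℝ) ^ n)⁻¹ * ((p : ℝ) / ((p : ℝ) - 1))) :=
    ha.trans (mul_le_mul_of_nonneg_left hgeom hS)
  have hb' : ‖φ (b : ℤ_[p]) - φ ((b % p ^ n : ℕ) : ℤ_[p])‖ ≤
      Real.sqrt p * spectralSeminorm p φ * (((p : ℝ) ^ n)⁻¹ * ((p : ℝ) / ((p : ℝ) - 1))) :=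
    hb.trans (mul_le_mul_of_nonneg_left hgeom hS)
  calc ‖φ (a : ℤ_[p]) - φ (b : ℤ_[p])‖
      ≤ ‖φ (a : ℤ_[p]) - φ ((a % p ^ n : ℕ) : ℤ_[p])‖ +
        ‖φ ((a % p ^ n : ℕ) : ℤ_[p]) - φ (b : ℤ_[p])‖ :=
        norm_sub_le_norm_sub_add_norm_sub _ _ _
    _ = ‖φ (a : ℤ_[p]) - φ ((a % p ^ n : ℕ) : ℤ_[p])‖ +
        ‖φ (b : ℤ_[p]) - φ ((b % p ^ n : ℕ) : ℤ_[p])‖ := by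
        rw [hab, ← norm_neg (φ ((b % p ^ n : ℕ) : ℤ_[p]) - φ (b : ℤ_[p])), neg_sub]
    _ ≤ _ := by
        have := add_le_add ha' hb'
        refine this.trans_eq ?_
        ring

/-- The main pairwise estimate on all of `ℤ_[p]`. -/
theorem pair_bound (x y : ℤ_[p]) :
    ‖φ x - φ y‖ ≤
      2 * (p : ℝ) * Real.sqrt p / ((p : ℝ) - 1) * spectralSeminorm p φ * ‖x - y‖ := by
  have hp1' : (1:ℝ) < p := hp1
  have hppos : (0:ℝ) < p := hp0
  have hKnn : 0 ≤ 2 * (p : ℝ) * Real.sqrt p / ((p : ℝ) - 1) * spectralSeminorm p φ := by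
    have hgt : (0:ℝ) < (p : ℝ) - 1 := by linarith
    apply mul_nonneg _ (Real.sqrt_nonneg _)
    positivity
  rcases eq_or_ne x y with rfl | hne
  · simp
  · obtain ⟨C, hC0, hC⟩ := C_exists φ hφ
    have hsub : x - y ≠ 0 := sub_ne_zero.mpr hne
    set n : ℕ := (x - y).valuation with hn
    have hval : ‖x - y‖ = ((p : ℝ) ^ n)⁻¹ := by
      rw [PadicInt.norm_eq_zpow_neg_valuation hsub, zpow_neg, zpow_natCast]
    refine le_of_forall_pos_le_add fun ε hε => ?_
    -- choose N large
    obtain ⟨N1, hN1⟩ := pow_unbounded_of_one_lt (2 * C / ε) hp1'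
    set N : ℕ := max n N1 with hNdef
    have hnN : n ≤ N := le_max_left _ _
    have h2C : 2 * C * ((p : ℝ) ^ N)⁻¹ ≤ ε := by
      have hpN1 : (0:ℝ) < (p : ℝ) ^ N1 := by positivity
      have hpN : (0:ℝ) < (p : ℝ) ^ N := by positivity
      have hmono : (p : ℝ) ^ N1 ≤ (p : ℝ) ^ N :=
        pow_le_pow_right₀ (le_of_lt hp1') (le_max_right _ _)
      have h1 : 2 * C < ε * (p : ℝ) ^ N1 := by
        rw [div_lt_iff₀ hε] at hN1
        linarith [hN1]
      have h2 : 2 * C ≤ ε * (p : ℝ) ^ N :=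
        h1.le.trans (mul_le_mul_of_nonneg_left hmono hε.le)
      calc 2 * C * ((p:ℝ) ^ N)⁻¹ ≤ (ε * (p:ℝ) ^ N) * ((p:ℝ) ^ N)⁻¹ :=
            mul_le_mul_of_nonneg_right h2 (by positivity)
        _ = ε := by field_simp
    set a : ℕ := x.appr N with ha
    set b : ℕ := y.appr N with hb
    have hxa : ‖x - (a : ℤ_[p])‖ ≤ ((p : ℝ) ^ N)⁻¹ := by
      have := (PadicInt.norm_le_pow_iff_mem_span_pow (x - (a : ℤ_[p])) N).mpr
        (PadicInt.appr_spec N x)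
      rwa [zpow_neg, zpow_natCast] at this
    have hyb : ‖y - (b : ℤ_[p])‖ ≤ ((p : ℝ) ^ N)⁻¹ := by
      have := (PadicInt.norm_le_pow_iff_mem_span_pow (y - (b : ℤ_[p])) N).mpr
        (PadicInt.appr_spec N y)
      rwa [zpow_neg, zpow_natCast] at this
    have hNn : ((p : ℝ) ^ N)⁻¹ ≤ ((p : ℝ) ^ n)⁻¹ := by
      apply inv_anti₀ (by positivity)
      exact pow_le_pow_right₀ (le_of_lt hp1') hnN
    -- a ≡ b mod p^n
    have hab : a % p ^ n = b % p ^ n := by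
      have hdist : ‖((a : ℤ_[p])) - (b : ℤ_[p])‖ ≤ ((p : ℝ) ^ n)⁻¹ := by
        have hsplit : ((a : ℤ_[p])) - (b : ℤ_[p]) =
            ((a : ℤ_[p]) - x) + ((x - y) + (y - (b : ℤ_[p]))) := by ring
        rw [hsplit]
        refine (PadicInt.nonarchimedean _ _).trans ?_
        refine max_le ?_ ((PadicInt.nonarchimedean _ _).trans (max_le ?_ ?_))
        · rw [← norm_neg, neg_sub]; exact hxa.trans hNn
        · rw [hval]
        · exact hyb.trans hNn
      have hint : ((a : ℤ_[p])) - (b : ℤ_[p]) = (((a : ℤ) - b : ℤ) : ℤ_[p]) := by push_cast; ring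
      rw [hint] at hdist
      have hdvd : (p : ℤ) ^ n ∣ (a : ℤ) - b := by
        rw [← PadicInt.norm_int_le_pow_iff_dvd]
        rw [zpow_neg, zpow_natCast]
        exact hdist
      have : b ≡ a [MOD p ^ n] := by
        rw [Nat.modEq_iff_dvd]
        push_cast
        exact hdvd
      exact this.symm
    have hmain := nat_pair φ hφ a b n hab
    -- triangle inequality
    have htri : ‖φ x - φ y‖ ≤ ‖φ x - φ (a : ℤ_[p])‖ + ‖φ (a : ℤ_[p]) - φ (b : ℤ_[p])‖ +
        ‖φ (b : ℤ_[p]) - φ y‖ := by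
      have h1 := norm_sub_le_norm_sub_add_norm_sub (φ x) (φ (a : ℤ_[p])) (φ y)
      have h2 := norm_sub_le_norm_sub_add_norm_sub (φ (a : ℤ_[p])) (φ (b : ℤ_[p])) (φ y)
      linarith
    have hxa' : ‖φ x - φ (a : ℤ_[p])‖ ≤ C * ((p : ℝ) ^ N)⁻¹ :=
      (hC _ _).trans (mul_le_mul_of_nonneg_left hxa hC0)
    have hyb' : ‖φ (b : ℤ_[p]) - φ y‖ ≤ C * ((p : ℝ) ^ N)⁻¹ := by
      refine (hC _ _).trans ?_
      rw [← norm_neg, neg_sub]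
      exact mul_le_mul_of_nonneg_left hyb hC0
    have heq : 2 * (Real.sqrt p * spectralSeminorm p φ) *
        (((p : ℝ) ^ n)⁻¹ * ((p : ℝ) / ((p : ℝ) - 1))) =
        2 * (p : ℝ) * Real.sqrt p / ((p : ℝ) - 1) * spectralSeminorm p φ * ‖x - y‖ := by
      rw [hval]
      field_simp
    calc ‖φ x - φ y‖ ≤ C * ((p : ℝ) ^ N)⁻¹ +
          2 * (Real.sqrt p * spectralSeminorm p φ) *
            (((p : ℝ) ^ n)⁻¹ * ((p : ℝ) / ((p : ℝ) - 1))) + C * ((p : ℝ) ^ N)⁻¹ := by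
          refine htri.trans ?_
          exact add_le_add (add_le_add hxa' hmain) hyb'
      _ = 2 * (Real.sqrt p * spectralSeminorm p φ) *
            (((p : ℝ) ^ n)⁻¹ * ((p : ℝ) / ((p : ℝ) - 1))) + 2 * C * ((p : ℝ) ^ N)⁻¹ := by ring
      _ ≤ 2 * (p : ℝ) * Real.sqrt p / ((p : ℝ) - 1) * spectralSeminorm p φ * ‖x - y‖ + ε := by
          rw [heq]
          exact add_le_add_right h2C _

end Stmt18Aux

theorem stmt18 (p : ℕ) [hp : Fact p.Prime] (φ : ℤ_[p] → ℂ)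
    (hφ : ∃ C : ℝ, ∀ x y : ℤ_[p], ‖φ x - φ y‖ ≤ C * ‖x - y‖) :
    Real.sqrt (((p : ℝ) - 1) / p) * lipSeminorm p φ ≥ spectralSeminorm p φ ∧
      spectralSeminorm p φ ≥ ((p : ℝ) - 1) / (2 * p * Real.sqrt p) * lipSeminorm p φ := by
  have hp1' : (1:ℝ) < p := Stmt18Aux.hp1
  have hppos : (0:ℝ) < p := Stmt18Aux.hp0
  have hLnn : 0 ≤ lipSeminorm p φ := Stmt18Aux.lip_nonneg φ hφ
  have hDnn : 0 ≤ spectralSeminorm p φ := Real.sqrt_nonneg _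
  haveI : Nonempty (Σ n : ℕ, Fin (p ^ n)) :=
    ⟨⟨0, ⟨0, Nat.pow_pos hp.out.pos⟩⟩⟩
  constructor
  · rw [ge_iff_le, Stmt18Aux.spectral_eq]
    have hsup : (⨆ x, Stmt18Aux.F p φ x) ≤ ((p:ℝ) - 1) / p * (lipSeminorm p φ) ^ 2 :=
      ciSup_le (Stmt18Aux.F_le φ hLnn (Stmt18Aux.lip_bound φ hφ))
    calc Real.sqrt (⨆ x, Stmt18Aux.F p φ x)
        ≤ Real.sqrt (((p:ℝ) - 1) / p * (lipSeminorm p φ) ^ 2) := Real.sqrt_le_sqrt hsup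
      _ = Real.sqrt (((p:ℝ) - 1) / p) * lipSeminorm p φ := by
          rw [Real.sqrt_mul (div_nonneg (by linarith) hppos.le), Real.sqrt_sq hLnn]
  · rw [ge_iff_le]
    have hK : lipSeminorm p φ ≤
        2 * (p:ℝ) * Real.sqrt p / ((p:ℝ) - 1) * spectralSeminorm p φ := by
      haveI : Nonempty {q : ℤ_[p] × ℤ_[p] // q.1 ≠ q.2} :=
        ⟨⟨(0, 1), by simp⟩⟩
      apply ciSup_le
      intro q
      have hpos : 0 < ‖(q : ℤ_[p] × ℤ_[p]).1 - (q : ℤ_[p] × ℤ_[p]).2‖ :=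
        norm_pos_iff.mpr (sub_ne_zero.mpr q.2)
      rw [div_le_iff₀ hpos]
      exact Stmt18Aux.pair_bound φ hφ _ _
    have hsqrt : (0:ℝ) < Real.sqrt p := Real.sqrt_pos.mpr hppos
    have hcnn : 0 ≤ ((p:ℝ) - 1) / (2 * p * Real.sqrt p) :=
      div_nonneg (by linarith) (by positivity)
    calc ((p:ℝ) - 1) / (2 * p * Real.sqrt p) * lipSeminorm p φ
        ≤ ((p:ℝ) - 1) / (2 * p * Real.sqrt p) *
            (2 * (p:ℝ) * Real.sqrt p / ((p:ℝ) - 1) * spectralSeminorm p φ) :=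
          mul_le_mul_of_nonneg_left hK hcnn
      _ = spectralSeminorm p φ := by
          have h1 : (p:ℝ) - 1 ≠ 0 := by linarith
          have h2 : Real.sqrt (p:ℝ) ≠ 0 := ne_of_gt hsqrt
          field_simp
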